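/- Under the interference-alignment hypotheses, let X_1, …, X_p (p ≥ 1) be pairwise disjoint nonempty subsets of {1,…,k} such that Σ_{ν∈X_i} rowSpace(S_ν) = 𝔽^l for every i ∈ {2,…,p}. Then every one of the r^p matrices Δ_{u_1 u_2 ⋯ u_p} = Γ_{1,u_1} · Γ_{2,u_2} ⋯ Γ_{p,u_p}, for (u_1,…,u_p) ∈ {1,…,r}^p, is a non-zero matrix. -/

import Mathlib

theorem stmt_10 {𝔽 : Type*} [Field 𝔽] (k r l : ℕ)
    (hk : 0 < k) (hr : 2 ≤ r) (hl : 0 < l) (hrl : r ∣ l)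
    (S : Fin k → Matrix (Fin (l / r)) (Fin l) 𝔽)
    (C : Fin r → Fin k → Matrix (Fin l) (Fin l) 𝔽)
    (hCinv : ∀ u j, IsUnit (C u j))
    (hC1 : ∀ j, C ⟨0, by omega⟩ j = 1)
    (hIA1 : ∀ (i j : Fin k), j ≠ i → ∀ u : Fin r,
      Submodule.span 𝔽 (Set.range (S i * C u j)) = Submodule.span 𝔽 (Set.range (S i)))
    (hIA2 : ∀ i : Fin k, iSupIndep
      fun u : Fin r => Submodule.span 𝔽 (Set.range (S i * C u i)))
    (hIA3 : ∀ i : Fin k,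
      (⨆ u : Fin r, Submodule.span 𝔽 (Set.range (S i * C u i))) = ⊤)
    (p : ℕ) (hp : 1 ≤ p) (X : Fin p → Finset (Fin k))
    (hXne : ∀ i, (X i).Nonempty)
    (hXdisj : ∀ i j, i ≠ j → Disjoint (X i) (X j))
    (hXspan : ∀ i : Fin p, (i : ℕ) ≠ 0 →
      (⨆ ν ∈ X i, Submodule.span 𝔽 (Set.range (S ν))) = ⊤)
    (Γ : Fin p → Fin r → Matrix (Fin l) (Fin l) 𝔽)
    (hΓ : ∀ i u, Γ i u =
      if (u : ℕ) = 0 then (1 : Matrix (Fin l) (Fin l) 𝔽) else ∑ j ∈ X i, C u j) :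
    ∀ u : Fin p → Fin r, (List.ofFn (fun i : Fin p => Γ i (u i))).prod ≠ 0 := by
  intro u
  classical
  -- row-space stability under right multiplication
  have hVrow : ∀ (M : Matrix (Fin (l / r)) (Fin l) 𝔽) (D : Matrix (Fin l) (Fin l) 𝔽)
      (x : Fin l → 𝔽), x ∈ Submodule.span 𝔽 (Set.range M) →
      Matrix.vecMul x D ∈ Submodule.span 𝔽 (Set.range (M * D)) := by
    intro M D x hx
    have h1 : (Matrix.vecMulLinear D) '' (Set.range M) = Set.range (M * D) := by
      refine (Set.range_comp (Matrix.vecMulLinear D) M).symm.trans ?_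
      refine congrArg Set.range (funext fun i => funext fun j => ?_)
      show Matrix.vecMul (M i) D j = _
      simp [Matrix.mul_apply, Matrix.vecMul, dotProduct]
    have h2 := Submodule.mem_map_of_mem (f := Matrix.vecMulLinear D) hx
    rw [Submodule.map_span, h1] at h2
    exact h2
  -- vecMul commutes with finite sums of matrices
  have hsum : ∀ (x : Fin l → 𝔽) (s : Finset (Fin k)) (f : Fin k → Matrix (Fin l) (Fin l) 𝔽),
      Matrix.vecMul x (∑ j ∈ s, f j) = ∑ j ∈ s, Matrix.vecMul x (f j) := by
    intro x s f
    induction s using Finset.induction_on with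
    | empty => simp
    | insert a s h ih =>
      rw [Finset.sum_insert h, Finset.sum_insert h, Matrix.vecMul_add, ih]
  -- single-factor injectivity lemma
  have hsingle : ∀ (w : Fin r), (w : ℕ) ≠ 0 → ∀ (s : Finset (Fin k)), ∀ ν ∈ s,
      ∀ x ∈ Submodule.span 𝔽 (Set.range (S ν)),
      Matrix.vecMul x (∑ j ∈ s, C w j) = 0 → x = 0 := by
    intro w hw s ν hν x hx h0
    rw [hsum] at h0
    rw [← Finset.add_sum_erase _ _ hν] at h0
    have hmem1 : Matrix.vecMul x (C w ν) ∈ Submodule.span 𝔽 (Set.range (S ν * C w ν)) :=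
      hVrow _ _ _ hx
    have hmem2 : Matrix.vecMul x (C w ν) ∈ Submodule.span 𝔽 (Set.range (S ν)) := by
      have heq : Matrix.vecMul x (C w ν)
          = - ∑ j ∈ s.erase ν, Matrix.vecMul x (C w j) := by
        rw [eq_neg_iff_add_eq_zero]
        exact h0
      rw [heq]
      refine Submodule.neg_mem _ (Submodule.sum_mem _ ?_)
      intro j hj
      have hjν : j ≠ ν := Finset.ne_of_mem_erase hj
      have hm := hVrow (S ν) (C w j) x hx
      rwa [hIA1 ν j hjν w] at hm
    have hdis : Disjoint (Submodule.span 𝔽 (Set.range (S ν * C w ν)))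
        (⨆ (j) (_ : j ≠ w), Submodule.span 𝔽 (Set.range (S ν * C j ν))) := hIA2 ν w
    have hz : (⟨0, by omega⟩ : Fin r) ≠ w := by
      intro h
      apply hw
      rw [← h]
    have hsub : Submodule.span 𝔽 (Set.range (S ν))
        ≤ ⨆ (j) (_ : j ≠ w), Submodule.span 𝔽 (Set.range (S ν * C j ν)) := by
      have h0' : Submodule.span 𝔽 (Set.range (S ν * C ⟨0, by omega⟩ ν))
          = Submodule.span 𝔽 (Set.range (S ν)) := by
        rw [hC1, Matrix.mul_one]
      rw [← h0']
      exact le_iSup₂ (f := fun (j : Fin r) (_ : j ≠ w) =>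
        Submodule.span 𝔽 (Set.range (S ν * C j ν))) ⟨0, by omega⟩ hz
    have hx0 : Matrix.vecMul x (C w ν) = 0 :=
      Submodule.disjoint_def.mp hdis _ hmem1 (hsub hmem2)
    have hdet : IsUnit (C w ν).det := (Matrix.isUnit_iff_isUnit_det _).mp (hCinv w ν)
    calc x = Matrix.vecMul x 1 := (Matrix.vecMul_one x).symm
      _ = Matrix.vecMul x (C w ν * (C w ν)⁻¹) := by rw [Matrix.mul_nonsing_inv _ hdet]
      _ = Matrix.vecMul (Matrix.vecMul x (C w ν)) ((C w ν)⁻¹) :=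
        (Matrix.vecMul_vecMul _ _ _).symm
      _ = 0 := by rw [hx0, Matrix.zero_vecMul]
  -- row spaces are nonzero
  have hVne : ∀ ν : Fin k, Submodule.span 𝔽 (Set.range (S ν)) ≠ ⊥ := by
    intro ν hbot
    have hrows : ∀ i, S ν i = 0 := by
      intro i
      have hmem : S ν i ∈ Submodule.span 𝔽 (Set.range (S ν)) :=
        Submodule.subset_span ⟨i, rfl⟩
      rw [hbot, Submodule.mem_bot] at hmem
      exact hmem
    have hspanbot : ∀ w : Fin r,
        Submodule.span 𝔽 (Set.range (S ν * C w ν)) = ⊥ := by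
      intro w
      rw [Submodule.span_eq_bot]
      rintro x ⟨i, rfl⟩
      ext j
      simp [Matrix.mul_apply, show ∀ a, S ν i a = 0 from fun a => congrFun (hrows i) a]
    have htop : (⊤ : Submodule 𝔽 (Fin l → 𝔽)) = ⊥ := by
      refine le_antisymm ?_ bot_le
      rw [← hIA3 ν]
      exact iSup_le fun w => (hspanbot w).le
    have h1mem : (fun _ => (1 : 𝔽)) ∈ (⊥ : Submodule 𝔽 (Fin l → 𝔽)) := by
      rw [← htop]; trivial
    rw [Submodule.mem_bot] at h1mem
    exact one_ne_zero (congrFun h1mem ⟨0, hl⟩)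
  -- the factor sequence, extended by identity matrices
  obtain ⟨g, hglt⟩ : ∃ g : ℕ → Matrix (Fin l) (Fin l) 𝔽,
      ∀ (i : ℕ) (h : i < p), g i = Γ ⟨i, h⟩ (u ⟨i, h⟩) :=
    ⟨fun i => if h : i < p then Γ ⟨i, h⟩ (u ⟨i, h⟩) else 1, fun i h => dif_pos h⟩
  -- prefix products
  obtain ⟨A, hA0, hAsucc, hAp⟩ : ∃ A : ℕ → Matrix (Fin l) (Fin l) 𝔽,
      A 0 = 1 ∧ (∀ m, A (m + 1) = A m * g m) ∧
      A p = (List.ofFn (fun i : Fin p => Γ i (u i))).prod := by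
    refine ⟨fun m => (List.ofFn fun i : Fin m => g i).prod, by simp, fun m => ?_, ?_⟩
    · show (List.ofFn fun i : Fin (m + 1) => g ↑i).prod = _
      rw [List.ofFn_succ', List.prod_concat]
      rfl
    · show (List.ofFn fun i : Fin p => g ↑i).prod = _
      have hfun : (fun i : Fin p => g ↑i) = fun i : Fin p => Γ i (u i) := by
        funext i
        rw [hglt ↑i i.isLt]
      rw [hfun]
  -- invariance of row spaces under prefix products
  have hinv : ∀ (m : ℕ), m ≤ p → ∀ (ν : Fin k), (∀ j : Fin p, (j : ℕ) < m → ν ∉ X j) →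
      ∀ x ∈ Submodule.span 𝔽 (Set.range (S ν)),
      Matrix.vecMul x (A m) ∈ Submodule.span 𝔽 (Set.range (S ν)) := by
    intro m
    induction m with
    | zero =>
      intro _ ν _ x hx
      rw [hA0, Matrix.vecMul_one]
      exact hx
    | succ m ih =>
      intro hmp ν hν x hx
      have hm : m < p := by omega
      rw [hAsucc, ← Matrix.vecMul_vecMul]
      have hy := ih (by omega) ν (fun j hj => hν j (by omega)) x hx
      rw [hglt m hm, hΓ]
      by_cases hu0 : ((u ⟨m, hm⟩ : Fin r) : ℕ) = 0
      · rw [if_pos hu0, Matrix.vecMul_one]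
        exact hy
      · rw [if_neg hu0, hsum]
        refine Submodule.sum_mem _ fun j hj => ?_
        have hjν : j ≠ ν := by
          rintro rfl
          exact hν ⟨m, hm⟩ (by simp) hj
        have hm2 := hVrow (S ν) (C (u ⟨m, hm⟩) j) _ hy
        rwa [hIA1 ν j hjν] at hm2
  -- main induction: prefix products are nonzero
  have hmain : ∀ m : ℕ, m ≤ p → A m ≠ 0 := by
    intro m
    induction m with
    | zero =>
      intro _ h0
      rw [hA0] at h0
      have h1 := congrFun (congrFun h0 ⟨0, hl⟩) ⟨0, hl⟩
      simp [Matrix.one_apply] at h1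
    | succ m ih =>
      intro hmp h0
      have hm : m < p := by omega
      by_cases hu0 : ((u ⟨m, hm⟩ : Fin r) : ℕ) = 0
      · rw [hAsucc, hglt m hm, hΓ, if_pos hu0, mul_one] at h0
        exact ih (by omega) h0
      · -- every vector of a row space of a node in X ⟨m⟩ is killed by A m
        have hkill : ∀ ν ∈ X ⟨m, hm⟩, ∀ x ∈ Submodule.span 𝔽 (Set.range (S ν)),
            Matrix.vecMul x (A m) = 0 := by
          intro ν hν x hx
          have hy : Matrix.vecMul x (A m) ∈ Submodule.span 𝔽 (Set.range (S ν)) := by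
            refine hinv m (by omega) ν (fun j hj hνj => ?_) x hx
            have hjm : j ≠ ⟨m, hm⟩ := by
              intro h
              rw [h] at hj
              simp at hj
            exact (Finset.disjoint_left.mp (hXdisj j ⟨m, hm⟩ hjm)) hνj hν
          refine hsingle (u ⟨m, hm⟩) hu0 (X ⟨m, hm⟩) ν hν _ hy ?_
          have hzero : Matrix.vecMul x (A (m + 1)) = 0 := by
            rw [h0, Matrix.vecMul_zero]
          rw [hAsucc, ← Matrix.vecMul_vecMul, hglt m hm, hΓ, if_neg hu0] at hzero
          exact hzero
        rcases Nat.eq_zero_or_pos m with hm0 | hmpos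
        · -- m = 0 : some row space would be ⊥
          subst hm0
          obtain ⟨ν, hν⟩ := hXne ⟨0, hm⟩
          refine hVne ν ((Submodule.eq_bot_iff _).mpr fun x hx => ?_)
          have hz := hkill ν hν x hx
          rwa [hA0, Matrix.vecMul_one] at hz
        · -- m ≥ 1 : the row spaces of X ⟨m⟩ span everything, so A m = 0
          have hsp := hXspan ⟨m, hm⟩ (by simp only [Fin.val_mk]; omega)
          have hker : ∀ x : Fin l → 𝔽, Matrix.vecMul x (A m) = 0 := by
            intro x
            have hx : x ∈ (⨆ ν ∈ X ⟨m, hm⟩, Submodule.span 𝔽 (Set.range (S ν))) := by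
              rw [hsp]; trivial
            have hle : (⨆ ν ∈ X ⟨m, hm⟩, Submodule.span 𝔽 (Set.range (S ν)))
                ≤ LinearMap.ker (Matrix.vecMulLinear (A m)) := by
              refine iSup₂_le fun ν hν => ?_
              intro y hy
              rw [LinearMap.mem_ker, Matrix.vecMulLinear_apply]
              exact hkill ν hν y hy
            have hx2 := hle hx
            rw [LinearMap.mem_ker, Matrix.vecMulLinear_apply] at hx2
            exact hx2
          have hAm0 : A m = 0 := by
            ext i j
            have h1 := congrFun (hker (Pi.single i 1)) j
            rw [Matrix.single_one_vecMul] at h1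
            simpa using h1
          exact ih (by omega) hAm0
  rw [← hAp]
  exact hmain p le_rfl
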